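/- arXiv:1404.6898 — 2 statements merged into one kernel-verified Lean document; each statement's English description precedes it below -/
import Mathlib

section
/- Fix integers N ≥ 4 and k with 1 ≤ k ≤ N. Then ‖ψ₃ − ψ₄‖² = 2(N−k)/(N−1) and ‖Π̂(ψ₃ − ψ₄)‖² = 2·C(N−4, k−3)/C(N−1, k−1), where C(n,r) denotes the binomial coefficient (equal to 0 when r < 0 or r > n). -/
/-- The set `D` of strings `z ∈ {0,1}^N` of Hamming weight `k`. -/
abbrev DSet (N k : ℕ) : Type :=
  {z : Fin N → Bool // (Finset.univ.filter fun x => z x = true).card = k}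

/-- The unit vector `ψ_x ∈ ℂ^D` with `ψ_x(z) = C(N−1,k−1)^{−1/2}` if `z_x = 1` and `0` else. -/
noncomputable def psi (N k : ℕ) (x : Fin N) : EuclideanSpace ℂ (DSet N k) :=
  WithLp.toLp 2 (fun z => if z.val x = true then ((Real.sqrt ((N - 1).choose (k - 1)) : ℝ)⁻¹ : ℂ) else 0)

/-- The orthogonal projection `Π̂` of `ℂ^D` onto the span of the standard basis vectors `e_z`
with `z₁ = z₂ = 1`. -/
noncomputable def projHat (N k : ℕ) (hN : 2 ≤ N)
    (v : EuclideanSpace ℂ (DSet N k)) : EuclideanSpace ℂ (DSet N k) :=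
  WithLp.toLp 2 (fun z => if z.val ⟨0, by omega⟩ = true ∧ z.val ⟨1, by omega⟩ = true then v z else 0)

lemma filter_decide_union (N : ℕ) (s F : Finset (Fin N)) :
    (Finset.univ.filter fun x => decide (x ∈ s ∪ F) = true) = s ∪ F := by
  ext x; simp

def defaultD (N k : ℕ) (hk : k ≤ N) : DSet N k :=
  ⟨fun x => decide (x.val < k), by
    have h : (Finset.univ.filter fun x : Fin N => decide (x.val < k) = true)
        = Finset.image (Fin.castLE hk) Finset.univ := by
      ext x
      simp only [Finset.mem_filter, Finset.mem_univ, true_and, decide_eq_true_eq,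
        Finset.mem_image]
      constructor
      · intro hx; exact ⟨⟨x.val, hx⟩, by simp [Fin.ext_iff]⟩
      · rintro ⟨y, rfl⟩; exact y.isLt
    rw [h, Finset.card_image_of_injective _ (Fin.castLE_injective hk), Finset.card_univ,
      Fintype.card_fin]⟩

lemma count_aux (N k : ℕ) (hk : k ≤ N) (F G : Finset (Fin N)) (hd : Disjoint F G) (hF : F.card ≤ k) :
    (Finset.univ.filter (fun z : DSet N k =>
        (∀ a ∈ F, z.val a = true) ∧ ∀ b ∈ G, z.val b = false)).card
    = ((Finset.univ : Finset (Fin N)) \ (F ∪ G)).card.choose (k - F.card) := by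
  classical
  rw [← Finset.card_powersetCard]
  apply Finset.card_nbij' (i := fun z => (Finset.univ.filter (fun x => z.val x = true)) \ F)
    (j := fun s => if h : (s ∪ F).card = k then
      ⟨fun x => decide (x ∈ s ∪ F), by rw [filter_decide_union]; exact h⟩
      else defaultD N k hk)
  · intro z hz
    beta_reduce
    simp only [Finset.mem_coe, Finset.mem_filter, Finset.mem_univ, true_and] at hz
    rw [Finset.mem_coe, Finset.mem_powersetCard]
    constructor
    · intro x hx
      simp only [Finset.mem_sdiff, Finset.mem_filter, Finset.mem_univ, true_and] at hx ⊢
      simp only [Finset.mem_union]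
      rintro (h | h)
      · exact hx.2 h
      · exact absurd (hz.2 x h) (by simp [hx.1])
    · rw [Finset.card_sdiff_of_subset (fun a ha => by simp [hz.1 a ha]), z.prop]
  · intro s hs
    beta_reduce
    rw [Finset.mem_coe, Finset.mem_powersetCard] at hs
    have hdisj : Disjoint s F := by
      refine Finset.disjoint_left.mpr fun x hx hxF => ?_
      have := hs.1 hx
      simp only [Finset.mem_sdiff, Finset.mem_union] at this
      exact this.2 (Or.inl hxF)
    have hcard : (s ∪ F).card = k := by
      rw [Finset.card_union_of_disjoint hdisj, hs.2]; omega
    rw [dif_pos hcard]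
    simp only [Finset.mem_coe, Finset.mem_filter, Finset.mem_univ, true_and]
    constructor
    · intro a ha; simp [ha]
    · intro b hb
      simp only [decide_eq_false_iff_not, Finset.mem_union, not_or]
      constructor
      · intro h; have := hs.1 h; simp [Finset.mem_sdiff, hb] at this
      · exact fun h => hd.forall_ne_finset h hb rfl
  · intro z hz
    beta_reduce
    simp only [Finset.mem_coe, Finset.mem_filter, Finset.mem_univ, true_and] at hz
    have hsub : F ⊆ Finset.univ.filter fun x => z.val x = true :=
      fun a ha => by simp [hz.1 a ha]
    have hcard : ((Finset.univ.filter fun x => z.val x = true) \ F ∪ F).card = k := by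
      rw [Finset.sdiff_union_of_subset hsub, z.prop]
    rw [dif_pos hcard]
    ext1
    funext x
    simp only []
    by_cases hx : z.val x = true
    · simp [hx, Finset.mem_union, Finset.mem_sdiff]
    · simp only [Bool.not_eq_true] at hx
      rw [hx]
      simp only [decide_eq_false_iff_not, Finset.mem_union, Finset.mem_sdiff, Finset.mem_filter]
      rintro (⟨⟨_, h⟩, _⟩ | h)
      · simp [hx] at h
      · exact absurd (hz.1 x h) (by simp [hx])
  · intro s hs
    beta_reduce
    rw [Finset.mem_coe, Finset.mem_powersetCard] at hs
    have hdisj : Disjoint s F := by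
      refine Finset.disjoint_left.mpr fun x hx hxF => ?_
      have := hs.1 hx
      simp only [Finset.mem_sdiff, Finset.mem_union] at this
      exact this.2 (Or.inl hxF)
    have hcard : (s ∪ F).card = k := by
      rw [Finset.card_union_of_disjoint hdisj, hs.2]; omega
    rw [dif_pos hcard]
    ext x
    simp only [Finset.mem_sdiff, Finset.mem_filter, Finset.mem_univ, true_and,
      decide_eq_true_eq, Finset.mem_union]
    constructor
    · rintro ⟨h | h, hF'⟩
      · exact h
      · exact absurd h hF'
    · intro h
      refine ⟨Or.inl h, fun hxF => ?_⟩
      have := hs.1 h; simp only [Finset.mem_sdiff, Finset.mem_union] at this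
      exact this.2 (Or.inl hxF)

lemma count_zero (N k : ℕ) (F G : Finset (Fin N)) (hF : k < F.card) :
    (Finset.univ.filter (fun z : DSet N k =>
        (∀ a ∈ F, z.val a = true) ∧ ∀ b ∈ G, z.val b = false)).card = 0 := by
  rw [Finset.card_eq_zero, Finset.filter_eq_empty_iff]
  rintro z - ⟨h1, -⟩
  have : F ⊆ Finset.univ.filter (fun x => z.val x = true) := fun a ha => by simp [h1 a ha]
  have := Finset.card_le_card this
  omega

/-- count of z with z a = true, z b = false, a ≠ b -/
lemma count11 (N k : ℕ) (hk1 : 1 ≤ k) (hkN : k ≤ N) (a b : Fin N) (hab : a ≠ b) :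
    (Finset.univ.filter (fun z : DSet N k => z.val a = true ∧ z.val b = false)).card
      = (N - 2).choose (k - 1) := by
  have hd : Disjoint ({a} : Finset (Fin N)) {b} := by
    simp only [Finset.disjoint_singleton]; exact hab
  have h := count_aux N k hkN {a} {b} hd (by simpa using hk1)
  simp only [Finset.mem_singleton, forall_eq, Finset.card_singleton] at h
  rw [h]
  congr 1
  rw [Finset.card_sdiff_of_subset (Finset.subset_univ _), Finset.card_univ, Fintype.card_fin]
  congr 1
  rw [Finset.card_union_of_disjoint hd, Finset.card_singleton, Finset.card_singleton]

lemma count31 (N k : ℕ) (hk3 : 3 ≤ k) (hkN : k ≤ N) (a₀ a₁ a₂ b : Fin N)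
    (h01 : a₀ ≠ a₁) (h02 : a₀ ≠ a₂) (h12 : a₁ ≠ a₂)
    (h0b : a₀ ≠ b) (h1b : a₁ ≠ b) (h2b : a₂ ≠ b) :
    (Finset.univ.filter (fun z : DSet N k =>
        z.val a₀ = true ∧ z.val a₁ = true ∧ z.val a₂ = true ∧ z.val b = false)).card
      = (N - 4).choose (k - 3) := by
  have hc3 : ({a₀, a₁, a₂} : Finset (Fin N)).card = 3 := by
    rw [Finset.card_insert_of_notMem (by simp [h01, h02]),
      Finset.card_insert_of_notMem (by simp [h12]), Finset.card_singleton]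
  have hd : Disjoint ({a₀, a₁, a₂} : Finset (Fin N)) {b} := by
    simp only [Finset.disjoint_singleton_right, Finset.mem_insert, Finset.mem_singleton]
    push_neg
    exact ⟨h0b.symm, h1b.symm, h2b.symm⟩
  have h := count_aux N k hkN {a₀, a₁, a₂} {b} hd (by omega)
  rw [Finset.filter_congr (q := fun z : DSet N k =>
      (∀ a ∈ ({a₀, a₁, a₂} : Finset (Fin N)), z.val a = true) ∧ ∀ c ∈ ({b} : Finset (Fin N)),
        z.val c = false) (fun z _ => by
      simp only [Finset.mem_insert, Finset.mem_singleton, forall_eq, forall_eq_or_imp]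
      tauto), h, hc3]
  congr 1
  rw [Finset.card_sdiff_of_subset (Finset.subset_univ _), Finset.card_univ, Fintype.card_fin]
  congr 1
  rw [Finset.card_union_of_disjoint hd, hc3, Finset.card_singleton]

lemma count31_zero (N k : ℕ) (hk3 : k < 3) (a₀ a₁ a₂ b : Fin N)
    (h01 : a₀ ≠ a₁) (h02 : a₀ ≠ a₂) (h12 : a₁ ≠ a₂) :
    (Finset.univ.filter (fun z : DSet N k =>
        z.val a₀ = true ∧ z.val a₁ = true ∧ z.val a₂ = true ∧ z.val b = false)).card = 0 := by
  have hc3 : ({a₀, a₁, a₂} : Finset (Fin N)).card = 3 := by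
    rw [Finset.card_insert_of_notMem (by simp [h01, h02]),
      Finset.card_insert_of_notMem (by simp [h12]), Finset.card_singleton]
  have h := count_zero N k {a₀, a₁, a₂} {b} (by omega)
  rw [Finset.filter_congr (q := fun z : DSet N k =>
      (∀ a ∈ ({a₀, a₁, a₂} : Finset (Fin N)), z.val a = true) ∧ ∀ c ∈ ({b} : Finset (Fin N)),
        z.val c = false) (fun z _ => by
      simp only [Finset.mem_insert, Finset.mem_singleton, forall_eq, forall_eq_or_imp]
      tauto), h]

theorem stmt13 (N k : ℕ) (hN : 4 ≤ N) (hk1 : 1 ≤ k) (hkN : k ≤ N) :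
    ‖psi N k ⟨2, by omega⟩ - psi N k ⟨3, by omega⟩‖ ^ 2
        = 2 * ((N : ℝ) - k) / ((N : ℝ) - 1)
      ∧ ‖projHat N k (by omega) (psi N k ⟨2, by omega⟩ - psi N k ⟨3, by omega⟩)‖ ^ 2
        = 2 * (if 3 ≤ k then (((N - 4).choose (k - 3) : ℕ) : ℝ) else 0) /
            (((N - 1).choose (k - 1) : ℕ) : ℝ) := by
  classical
  set B : ℕ := (N - 1).choose (k - 1) with hBdef
  have hB : 0 < B := Nat.choose_pos (by omega)
  set c : ℝ := (Real.sqrt B)⁻¹ with hcdef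
  have hc0 : 0 ≤ c := by positivity
  have hc2 : c ^ 2 = (B : ℝ)⁻¹ := by
    rw [hcdef, inv_pow, Real.sq_sqrt (Nat.cast_nonneg _)]
  -- pointwise norm computation
  have key : ∀ (a b : Bool),
      ‖(if a = true then (c : ℂ) else 0) - (if b = true then (c : ℂ) else 0)‖ ^ 2
        = (if a = true ∧ b = false then c ^ 2 else 0)
          + (if a = false ∧ b = true then c ^ 2 else 0) := by
    intro a b
    rcases a <;> rcases b <;>
      simp [Complex.norm_real, Real.norm_eq_abs, abs_of_nonneg hc0]
  have hsum : ∀ v : EuclideanSpace ℂ (DSet N k), ‖v‖ ^ 2 = ∑ z, ‖v z‖ ^ 2 := by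
    intro v
    rw [EuclideanSpace.norm_eq, Real.sq_sqrt (Finset.sum_nonneg fun z _ => by positivity)]
  have happ : ∀ z : DSet N k,
      (psi N k ⟨2, by omega⟩ - psi N k ⟨3, by omega⟩) z
        = (if z.val ⟨2, by omega⟩ = true then (c : ℂ) else 0)
          - (if z.val ⟨3, by omega⟩ = true then (c : ℂ) else 0) := by
    intro z
    rw [PiLp.sub_apply]
    simp only [psi, ← hBdef, hcdef, Complex.ofReal_inv]
  constructor
  · rw [hsum]
    have : ∀ z : DSet N k, ‖(psi N k ⟨2, by omega⟩ - psi N k ⟨3, by omega⟩) z‖ ^ 2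
        = (if z.val ⟨2, by omega⟩ = true ∧ z.val ⟨3, by omega⟩ = false then c ^ 2 else 0)
          + (if z.val ⟨2, by omega⟩ = false ∧ z.val ⟨3, by omega⟩ = true then c ^ 2 else 0) := by
      intro z; rw [happ z, key]
    rw [Finset.sum_congr rfl fun z _ => this z, Finset.sum_add_distrib,
      Finset.sum_ite, Finset.sum_const, Finset.sum_const_zero, add_zero,
      Finset.sum_ite, Finset.sum_const, Finset.sum_const_zero, add_zero,
      count11 N k hk1 hkN ⟨2, by omega⟩ ⟨3, by omega⟩ (by simp [Fin.ext_iff])]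
    have h2 : (Finset.univ.filter (fun z : DSet N k =>
        z.val ⟨2, by omega⟩ = false ∧ z.val ⟨3, by omega⟩ = true)).card
        = (N - 2).choose (k - 1) := by
      rw [Finset.filter_congr (q := fun z : DSet N k =>
        z.val ⟨3, by omega⟩ = true ∧ z.val ⟨2, by omega⟩ = false) (fun z _ => by tauto)]
      exact count11 N k hk1 hkN ⟨3, by omega⟩ ⟨2, by omega⟩ (by simp [Fin.ext_iff])
    rw [h2, nsmul_eq_mul, hc2]
    -- arithmetic
    have keyN : (N - 2).choose (k - 1) * (N - 1) = B * (N - k) := by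
      have := Nat.choose_mul_succ_eq (N - 2) (k - 1)
      rw [show N - 2 + 1 = N - 1 by omega, show N - 1 - (k - 1) = N - k by omega] at this
      exact this
    have keyR : ((N - 2).choose (k - 1) : ℝ) * ((N : ℝ) - 1) = (B : ℝ) * ((N : ℝ) - k) := by
      have := congrArg (fun n : ℕ => (n : ℝ)) keyN
      push_cast [Nat.cast_sub (by omega : 1 ≤ N), Nat.cast_sub hkN] at this
      convert this using 2
    have hBne : (B : ℝ) ≠ 0 := Nat.cast_ne_zero.mpr hB.ne'
    have hN1 : (N : ℝ) - 1 ≠ 0 := by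
      have : (4 : ℝ) ≤ N := by exact_mod_cast hN
      nlinarith
    field_simp
    nlinarith [keyR]
  · rw [hsum]
    have happ2 : ∀ z : DSet N k,
        ‖projHat N k (by omega) (psi N k ⟨2, by omega⟩ - psi N k ⟨3, by omega⟩) z‖ ^ 2
        = (if z.val ⟨0, by omega⟩ = true ∧ z.val ⟨1, by omega⟩ = true
              ∧ z.val ⟨2, by omega⟩ = true ∧ z.val ⟨3, by omega⟩ = false then c ^ 2 else 0)
          + (if z.val ⟨0, by omega⟩ = true ∧ z.val ⟨1, by omega⟩ = true
              ∧ z.val ⟨3, by omega⟩ = true ∧ z.val ⟨2, by omega⟩ = false then c ^ 2 else 0) := by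
      intro z
      show ‖(if z.val ⟨0, by omega⟩ = true ∧ z.val ⟨1, by omega⟩ = true then _ else 0)‖ ^ 2 = _
      by_cases h01 : z.val ⟨0, by omega⟩ = true ∧ z.val ⟨1, by omega⟩ = true
      · rw [if_pos h01, happ z, key]
        simp only [h01, true_and]
        congr 1
        exact if_congr and_comm rfl rfl
      · rw [if_neg h01]
        have : ¬ (z.val ⟨0, by omega⟩ = true ∧ z.val ⟨1, by omega⟩ = true
            ∧ z.val ⟨2, by omega⟩ = true ∧ z.val ⟨3, by omega⟩ = false) := by tauto
        have h2 : ¬ (z.val ⟨0, by omega⟩ = true ∧ z.val ⟨1, by omega⟩ = true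
            ∧ z.val ⟨3, by omega⟩ = true ∧ z.val ⟨2, by omega⟩ = false) := by tauto
        rw [if_neg this, if_neg h2]
        simp
    rw [Finset.sum_congr rfl fun z _ => happ2 z, Finset.sum_add_distrib,
      Finset.sum_ite, Finset.sum_const, Finset.sum_const_zero, add_zero,
      Finset.sum_ite, Finset.sum_const, Finset.sum_const_zero, add_zero]
    by_cases hk3 : 3 ≤ k
    · rw [if_pos hk3,
        count31 N k hk3 hkN ⟨0, by omega⟩ ⟨1, by omega⟩ ⟨2, by omega⟩ ⟨3, by omega⟩
          (by simp [Fin.ext_iff]) (by simp [Fin.ext_iff])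
          (by simp [Fin.ext_iff]) (by simp [Fin.ext_iff]) (by simp [Fin.ext_iff])
          (by simp [Fin.ext_iff]),
        count31 N k hk3 hkN ⟨0, by omega⟩ ⟨1, by omega⟩ ⟨3, by omega⟩ ⟨2, by omega⟩
          (by simp [Fin.ext_iff]) (by simp [Fin.ext_iff])
          (by simp [Fin.ext_iff]) (by simp [Fin.ext_iff]) (by simp [Fin.ext_iff])
          (by simp [Fin.ext_iff]),
        nsmul_eq_mul, hc2]
      have hBne : (B : ℝ) ≠ 0 := Nat.cast_ne_zero.mpr hB.ne'
      field_simp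
      ring
    · rw [if_neg hk3,
        count31_zero N k (by omega) ⟨0, by omega⟩ ⟨1, by omega⟩ ⟨2, by omega⟩ ⟨3, by omega⟩
          (by simp [Fin.ext_iff]) (by simp [Fin.ext_iff]) (by simp [Fin.ext_iff]),
        count31_zero N k (by omega) ⟨0, by omega⟩ ⟨1, by omega⟩ ⟨3, by omega⟩ ⟨2, by omega⟩
          (by simp [Fin.ext_iff]) (by simp [Fin.ext_iff]) (by simp [Fin.ext_iff])]
      simp
end

section
/- Fix integers N ≥ 3 and k with 2 ≤ k ≤ N. Then for all complex numbers α and β: ‖Π̂(α(ψ₁ + ψ₂) + β Σ_{x=3}^{N} ψ_x)‖² = ((k−1)/(N−1)) · |2α + (k−2)β|². -/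
theorem stmt17 (N k : ℕ) (hN : 3 ≤ N) (hk2 : 2 ≤ k) (hkN : k ≤ N) (α β : ℂ) :
    ‖projHat N k (by omega)
        (α • (psi N k ⟨0, by omega⟩ + psi N k ⟨1, by omega⟩) +
          β • ∑ x ∈ Finset.univ.filter (fun x : Fin N => 2 ≤ (x : ℕ)), psi N k x)‖ ^ 2
      = ((k : ℝ) - 1) / ((N : ℝ) - 1) *
          ‖2 * α + ((((k : ℝ) - 2) : ℝ) : ℂ) * β‖ ^ 2 := by
  have h0N : (0:ℕ) < N := by omega
  have h1N : (1:ℕ) < N := by omega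
  set x0 : Fin N := ⟨0, by omega⟩ with hx0
  set x1 : Fin N := ⟨1, by omega⟩ with hx1
  have hne : x0 ≠ x1 := by simp [hx0, hx1, Fin.ext_iff]
  set c : ℝ := (Real.sqrt ((N - 1).choose (k - 1)))⁻¹ with hc
  have hchoose_pos : 0 < (N-1).choose (k-1) := Nat.choose_pos (by omega)
  have hXpos : (0:ℝ) < ((N-1).choose (k-1) : ℝ) := by exact_mod_cast hchoose_pos
  have hcpos : 0 < c := by
    rw [hc]
    exact inv_pos.mpr (Real.sqrt_pos.mpr hXpos)
  -- pair finset
  have hpaircard : ({x0, x1} : Finset (Fin N)).card = 2 := by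
    rw [Finset.card_insert_of_notMem (by simp [hne]), Finset.card_singleton]
  -- count of 1s beyond positions 0,1
  have hcard2 : ∀ z : DSet N k, z.val x0 = true → z.val x1 = true →
      ((Finset.univ.filter (fun x : Fin N => 2 ≤ (x:ℕ))).filter
        (fun x => z.val x = true)).card = k - 2 := by
    intro z h0 h1
    have hcomm : (Finset.univ.filter (fun x : Fin N => 2 ≤ (x:ℕ))).filter
          (fun x => z.val x = true)
        = (Finset.univ.filter (fun x : Fin N => z.val x = true)).filter
          (fun x : Fin N => 2 ≤ (x:ℕ)) := Finset.filter_comm _ _ _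
    have hneg : (Finset.univ.filter (fun x : Fin N => z.val x = true)).filter
        (fun x : Fin N => ¬ 2 ≤ (x:ℕ)) = {x0, x1} := by
      ext x
      simp only [Finset.mem_filter, Finset.mem_univ, true_and, Finset.mem_insert,
        Finset.mem_singleton, not_le]
      constructor
      · rintro ⟨-, hlt⟩
        have : (x:ℕ) = 0 ∨ (x:ℕ) = 1 := by omega
        rcases this with h | h
        · exact Or.inl (by simp [hx0, Fin.ext_iff, h])
        · exact Or.inr (by simp [hx1, Fin.ext_iff, h])
      · rintro (rfl | rfl)
        · exact ⟨h0, by simp [hx0]⟩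
        · exact ⟨h1, by simp [hx1]⟩
    have hsplit := Finset.card_filter_add_card_filter_not
      (s := Finset.univ.filter (fun x : Fin N => z.val x = true))
      (p := fun x : Fin N => 2 ≤ (x:ℕ))
    rw [hneg, hpaircard, z.property] at hsplit
    rw [hcomm]
    omega
  -- pointwise value of the projection
  have hpt : ∀ z : DSet N k,
      projHat N k (by omega)
        (α • (psi N k x0 + psi N k x1) +
          β • ∑ x ∈ Finset.univ.filter (fun x : Fin N => 2 ≤ (x : ℕ)), psi N k x) z
      = if z.val x0 = true ∧ z.val x1 = true then
          (2 * α + ((((k : ℝ) - 2) : ℝ) : ℂ) * β) * (c : ℂ) else 0 := by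
    intro z
    simp only [projHat]
    by_cases hcond : z.val x0 = true ∧ z.val x1 = true
    · rw [if_pos hcond, if_pos hcond]
      have happ : (α • (psi N k x0 + psi N k x1) +
          β • ∑ x ∈ Finset.univ.filter (fun x : Fin N => 2 ≤ (x : ℕ)), psi N k x) z
          = α * (psi N k x0 z + psi N k x1 z) +
            β * ∑ x ∈ Finset.univ.filter (fun x : Fin N => 2 ≤ (x : ℕ)), psi N k x z := by
        have := Finset.sum_apply z (Finset.univ.filter (fun x : Fin N => 2 ≤ (x : ℕ)))
          (fun x => psi N k x)
        simp only [PiLp.add_apply, PiLp.smul_apply, smul_eq_mul]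
        rw [WithLp.ofLp_sum, this]
      rw [happ]
      have h0 : psi N k x0 z = (c : ℂ) := by simp [psi, hcond.1, hc]
      have h1 : psi N k x1 z = (c : ℂ) := by simp [psi, hcond.2, hc]
      have hsum : ∑ x ∈ Finset.univ.filter (fun x : Fin N => 2 ≤ (x : ℕ)), psi N k x z
          = ((k - 2 : ℕ) : ℂ) * (c : ℂ) := by
        unfold psi
        rw [← Finset.sum_filter, Finset.sum_const, hcard2 z hcond.1 hcond.2, nsmul_eq_mul]
        rw [hc]
        push_cast
        ring
      rw [h0, h1, hsum]
      have : ((k - 2 : ℕ) : ℂ) = ((k : ℝ) : ℂ) - 2 := by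
        push_cast [Nat.cast_sub hk2]
        norm_num
      rw [this]
      push_cast
      ring
    · rw [if_neg hcond, if_neg hcond]
  -- norm squared as a sum
  rw [EuclideanSpace.norm_eq, Real.sq_sqrt (by positivity)]
  have hA : ∀ z : DSet N k,
      ‖(if z.val x0 = true ∧ z.val x1 = true then
          (2 * α + ((((k : ℝ) - 2) : ℝ) : ℂ) * β) * (c : ℂ) else 0)‖ ^ 2
      = if z.val x0 = true ∧ z.val x1 = true then
          ‖2 * α + ((((k : ℝ) - 2) : ℝ) : ℂ) * β‖ ^ 2 * c ^ 2 else 0 := by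
    intro z
    by_cases hcond : z.val x0 = true ∧ z.val x1 = true
    · rw [if_pos hcond, if_pos hcond, norm_mul, Complex.norm_real, Real.norm_eq_abs,
        abs_of_pos hcpos]
      ring
    · rw [if_neg hcond, if_neg hcond]
      simp
  simp only [hpt, hA]
  rw [← Finset.sum_filter, Finset.sum_const]
  -- counting
  have hsdcard : ((Finset.univ : Finset (Fin N)) \ {x0, x1}).card = N - 2 := by
    rw [Finset.card_sdiff_of_subset (Finset.subset_univ _), hpaircard, Finset.card_univ, Fintype.card_fin]
  have hjcard : ∀ s ∈ Finset.powersetCard (k-2) ((Finset.univ : Finset (Fin N)) \ {x0, x1}),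
      (Finset.univ.filter (fun x : Fin N => decide (x ∈ s ∪ {x0, x1}) = true)).card = k := by
    intro s hs
    rw [Finset.mem_powersetCard] at hs
    have hdisj : Disjoint s ({x0, x1} : Finset (Fin N)) := by
      refine Finset.disjoint_left.mpr ?_
      intro a ha hpa
      have := hs.1 ha
      rw [Finset.mem_sdiff] at this
      exact this.2 hpa
    simp only [decide_eq_true_eq]
    rw [Finset.filter_univ_mem, Finset.card_union_of_disjoint hdisj, hs.2, hpaircard]
    omega
  have hcardD : (Finset.univ.filter
      (fun z : DSet N k => z.val x0 = true ∧ z.val x1 = true)).card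
      = (N - 2).choose (k - 2) := by
    rw [← hsdcard, ← Finset.card_powersetCard (k-2) ((Finset.univ : Finset (Fin N)) \ {x0, x1})]
    refine Finset.card_bij'
      (fun (z : DSet N k) _ =>
        (Finset.univ.filter (fun x : Fin N => z.val x = true)) \ {x0, x1})
      (fun s hs => (⟨fun x => decide (x ∈ s ∪ {x0, x1}), hjcard s hs⟩ : DSet N k))
      ?_ ?_ ?_ ?_
    · -- hi : image in powersetCard
      intro z hz
      rw [Finset.mem_filter] at hz
      rw [Finset.mem_powersetCard]
      refine ⟨Finset.sdiff_subset_sdiff (Finset.subset_univ _) (Finset.Subset.refl _), ?_⟩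
      have hsub : ({x0, x1} : Finset (Fin N)) ⊆
          Finset.univ.filter (fun x : Fin N => z.val x = true) := by
        intro y hy
        simp only [Finset.mem_insert, Finset.mem_singleton] at hy
        rcases hy with rfl | rfl
        · simp [hz.2.1]
        · simp [hz.2.2]
      rw [Finset.card_sdiff_of_subset hsub, z.property, hpaircard]
    · -- hj : preimage in filter
      intro s hs
      simp only [Finset.mem_filter]
      refine ⟨Finset.mem_univ _, ?_, ?_⟩ <;> simp
    · -- left inverse
      intro z hz
      rw [Finset.mem_filter] at hz
      apply Subtype.ext
      funext x
      simp only
      have hsub : ({x0, x1} : Finset (Fin N)) ⊆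
          Finset.univ.filter (fun x : Fin N => z.val x = true) := by
        intro y hy
        simp only [Finset.mem_insert, Finset.mem_singleton] at hy
        rcases hy with rfl | rfl
        · simp [hz.2.1]
        · simp [hz.2.2]
      rw [Finset.sdiff_union_of_subset hsub]
      cases h : z.val x <;> simp [h]
    · -- right inverse
      intro s hs
      rw [Finset.mem_powersetCard] at hs
      have hdisj : Disjoint s ({x0, x1} : Finset (Fin N)) := by
        refine Finset.disjoint_left.mpr ?_
        intro a ha hpa
        have := hs.1 ha
        rw [Finset.mem_sdiff] at this
        exact this.2 hpa
      simp only [decide_eq_true_eq]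
      rw [Finset.filter_univ_mem, Finset.union_sdiff_right,
        Finset.sdiff_eq_self_of_disjoint hdisj]
  rw [hcardD, nsmul_eq_mul]
  -- final arithmetic
  have hc2 : c ^ 2 = (((N-1).choose (k-1) : ℝ))⁻¹ := by
    rw [hc, ← Real.sqrt_inv, Real.sq_sqrt (by positivity)]
  rw [hc2]
  have key : ((N-1:ℕ):ℝ) * ((N-2).choose (k-2) : ℝ)
      = ((N-1).choose (k-1) : ℝ) * ((k-1:ℕ):ℝ) := by
    have h := Nat.add_one_mul_choose_eq (N-2) (k-2)
    have h1 : N-2+1 = N - 1 := by omega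
    have h2 : k-2+1 = k - 1 := by omega
    rw [h1, h2] at h
    exact_mod_cast h
  have hN1 : ((N-1:ℕ):ℝ) = (N:ℝ) - 1 := by push_cast [Nat.cast_sub (by omega : 1 ≤ N)]; ring
  have hk1 : ((k-1:ℕ):ℝ) = (k:ℝ) - 1 := by push_cast [Nat.cast_sub (by omega : 1 ≤ k)]; ring
  rw [hN1, hk1] at key
  have hNne : (N:ℝ) - 1 ≠ 0 := by
    have : (3:ℝ) ≤ (N:ℝ) := by exact_mod_cast hN
    linarith
  field_simp
  nlinarith [key, sq_nonneg (‖2 * α + ((((k : ℝ) - 2) : ℝ) : ℂ) * β‖)]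
end
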